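/- arXiv:2111.14608 — 2 statements merged into one kernel-verified Lean document; each statement's English description precedes it below -/
import Mathlib

section
/- In the GEW₁ model (uniform priors on all parameters), the full conditional posterior density of the Weibull shape parameter β is log-concave on (0, ∞). Precisely: for any fixed θ₁, θ₂, θ₃, θ₄ ∈ ℝ, writing A_i = exp(−θ₁ − θ₂/T_i − θ₃V_i − θ₄V_i/T_i), the function ℓ : (0,∞) → ℝ given by ℓ(b) = (Σ_{i=1}^k r_i)·ln b − Σ_{i=1}^k (n_i − r_i) T_i A_i τ_i^b − Σ_{i=1}^k Σ_{j=1}^{r_i} T_i A_i x_{ij}^b + (b − 1)·Σ_{i=1}^k Σ_{j=1}^{r_i} ln x_{ij} is concave on (0, ∞). -/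
open Real Finset

lemma convexOn_finset_sum' {ι : Type*} (s : Set ℝ) (hs : Convex ℝ s) (t : Finset ι)
    (f : ι → ℝ → ℝ) (h : ∀ i ∈ t, ConvexOn ℝ s (f i)) :
    ConvexOn ℝ s (fun b => ∑ i ∈ t, f i b) := by
  classical
  induction t using Finset.cons_induction with
  | empty => simpa using convexOn_const 0 hs
  | cons a t ha ih =>
    simp only [Finset.sum_cons]
    exact (h a (Finset.mem_cons_self a t)).add
      (ih fun i hi => h i (Finset.mem_cons_of_mem hi))

lemma convexOn_mul_exp_mul (c a : ℝ) (hc : 0 ≤ c) :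
    ConvexOn ℝ (Set.Ioi (0:ℝ)) (fun b => c * Real.exp (a * b)) := by
  have h1 : ConvexOn ℝ Set.univ (fun b : ℝ => Real.exp (a * b)) := by
    have := convexOn_exp.comp_affineMap ((LinearMap.mulLeft ℝ a).toAffineMap)
    simpa [Function.comp_def] using this
  exact ((h1.subset (Set.subset_univ _) (convex_Ioi 0)).smul hc)

theorem gew1_beta_logconcave
    (k : ℕ) (T V τ : Fin k → ℝ) (n r : Fin k → ℕ)
    (x : (i : Fin k) → Fin (r i) → ℝ)
    (hT : ∀ i, 0 < T i) (hrn : ∀ i, r i ≤ n i)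
    (hτ : ∀ i, 0 < τ i) (hx : ∀ i j, 0 < x i j)
    (θ₁ θ₂ θ₃ θ₄ : ℝ) :
    ConcaveOn ℝ (Set.Ioi (0 : ℝ)) (fun b : ℝ =>
      (∑ i, (r i : ℝ)) * Real.log b
      - ∑ i, ((n i : ℝ) - r i) * T i * Real.exp (-θ₁ - θ₂ / T i - θ₃ * V i - θ₄ * V i / T i) * τ i ^ b
      - ∑ i, ∑ j, T i * Real.exp (-θ₁ - θ₂ / T i - θ₃ * V i - θ₄ * V i / T i) * x i j ^ b
      + (b - 1) * ∑ i, ∑ j, Real.log (x i j)) := by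
  have hA : ∀ i, 0 < Real.exp (-θ₁ - θ₂ / T i - θ₃ * V i - θ₄ * V i / T i) :=
    fun i => Real.exp_pos _
  set A : Fin k → ℝ := fun i => Real.exp (-θ₁ - θ₂ / T i - θ₃ * V i - θ₄ * V i / T i) with hAdef
  -- concavity of the log term
  have h1 : ConcaveOn ℝ (Set.Ioi (0:ℝ)) (fun b => (∑ i, (r i : ℝ)) * Real.log b) := by
    have := (strictConcaveOn_log_Ioi.concaveOn).smul
      (c := ∑ i, (r i : ℝ)) (by positivity)
    simpa [smul_eq_mul] using this
  -- convexity of first sum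
  have h2 : ConvexOn ℝ (Set.Ioi (0:ℝ)) (fun b =>
      ∑ i, ((n i : ℝ) - r i) * T i * A i * τ i ^ b) := by
    have : ∀ i, ConvexOn ℝ (Set.Ioi (0:ℝ))
        (fun b => ((n i : ℝ) - r i) * T i * A i * τ i ^ b) := by
      intro i
      have hc : 0 ≤ ((n i : ℝ) - r i) * T i * A i := by
        have : (r i : ℝ) ≤ n i := Nat.cast_le.mpr (hrn i)
        have h0 : 0 ≤ (n i : ℝ) - r i := by linarith
        exact mul_nonneg (mul_nonneg h0 (hT i).le) (hA i).le
      have := convexOn_mul_exp_mul _ (Real.log (τ i)) hc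
      refine this.congr ?_
      intro b hb
      dsimp only
      rw [Real.rpow_def_of_pos (hτ i), mul_comm (Real.log (τ i)) b]
    exact convexOn_finset_sum' _ (convex_Ioi 0) _ _ (fun i _ => this i)
  -- convexity of double sum
  have h3 : ConvexOn ℝ (Set.Ioi (0:ℝ)) (fun b =>
      ∑ i, ∑ j, T i * A i * x i j ^ b) := by
    refine convexOn_finset_sum' _ (convex_Ioi 0) _ _ (fun i _ => ?_)
    refine convexOn_finset_sum' _ (convex_Ioi 0) _ _ (fun j _ => ?_)
    have hc : 0 ≤ T i * A i := mul_nonneg (hT i).le (hA i).le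
    have := convexOn_mul_exp_mul _ (Real.log (x i j)) hc
    refine this.congr ?_
    intro b hb
    dsimp only
    rw [Real.rpow_def_of_pos (hx i j), mul_comm (Real.log (x i j)) b]
  -- concavity of the affine term
  have h4 : ConcaveOn ℝ (Set.Ioi (0:ℝ))
      (fun b : ℝ => (b - 1) * ∑ i, ∑ j, Real.log (x i j)) := by
    refine ⟨convex_Ioi 0, ?_⟩
    intro p hp q hq a b ha hb hab
    simp only [smul_eq_mul]
    apply le_of_eq
    linear_combination (-∑ i, ∑ j, Real.log (x i j)) * hab
  have := ((h1.sub h2).sub h3).add h4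
  simpa [sub_mul, hAdef, Pi.sub_def, Pi.add_def] using this
end

section
/- In the GEW₂ model (gamma priors on all parameters), the full conditional posterior density of θ₂ is log-concave on (0, ∞), provided the gamma shape hyperparameter c₁₂ satisfies c₁₂ ≥ 1. Precisely: for any fixed θ₁, θ₃, θ₄ > 0, β > 0, c₁₂ ≥ 1 and c₁₃ > 0, the function ℓ : (0,∞) → ℝ given by ℓ(t) = (c₁₂ − 1)·ln t − c₁₃·t − t·(Σ_{i=1}^k r_i/T_i) − Σ_{i=1}^k (n_i − r_i) T_i exp(−θ₁ − t/T_i − θ₃V_i − θ₄V_i/T_i) τ_i^β − Σ_{i=1}^k Σ_{j=1}^{r_i} T_i exp(−θ₁ − t/T_i − θ₃V_i − θ₄V_i/T_i) x_{ij}^β is concave on (0, ∞). -/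
open Real Finset

private lemma convexOn_sum' {ι : Type*} (s : Finset ι) (S : Set ℝ) (hS : Convex ℝ S)
    (f : ι → ℝ → ℝ) (hf : ∀ i ∈ s, ConvexOn ℝ S (f i)) :
    ConvexOn ℝ S (fun t => ∑ i ∈ s, f i t) := by
  classical
  induction s using Finset.induction_on with
  | empty => simpa using convexOn_const 0 hS
  | insert a s' hni ih =>
    simp only [Finset.sum_insert hni]
    exact (hf a (Finset.mem_insert_self a s')).add
      (ih fun i hi => hf i (Finset.mem_insert_of_mem hi))

private lemma convexOn_mul_exp (S : Set ℝ) (hS : Convex ℝ S) (A B Ti c₁ c₂ c₃ : ℝ)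
    (hA : 0 ≤ A) (hB : 0 ≤ B) :
    ConvexOn ℝ S (fun t => A * Real.exp (-c₁ - t / Ti - c₂ - c₃) * B) := by
  refine ⟨hS, fun u hu v hv p q hp hq hpq => ?_⟩
  simp only [smul_eq_mul]
  have hexp := convexOn_exp.2 (Set.mem_univ (-c₁ - u / Ti - c₂ - c₃))
    (Set.mem_univ (-c₁ - v / Ti - c₂ - c₃)) hp hq hpq
  simp only [smul_eq_mul] at hexp
  have harg : -c₁ - (p * u + q * v) / Ti - c₂ - c₃
      = p * (-c₁ - u / Ti - c₂ - c₃) + q * (-c₁ - v / Ti - c₂ - c₃) := by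
    rcases eq_or_ne Ti 0 with h | h
    · simp [h]; linear_combination (c₁ + c₂ + c₃) * hpq
    · field_simp
      linear_combination (Ti * (c₁ + c₂ + c₃)) * hpq
  rw [harg]
  have h2 : A * B * Real.exp (p * (-c₁ - u / Ti - c₂ - c₃) + q * (-c₁ - v / Ti - c₂ - c₃))
      ≤ A * B * (p * Real.exp (-c₁ - u / Ti - c₂ - c₃) + q * Real.exp (-c₁ - v / Ti - c₂ - c₃)) :=
    mul_le_mul_of_nonneg_left hexp (mul_nonneg hA hB)
  nlinarith [h2]

private lemma convexOn_linear (S : Set ℝ) (hS : Convex ℝ S) (a : ℝ) :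
    ConvexOn ℝ S (fun t => a * t) := by
  refine ⟨hS, fun u hu v hv p q hp hq hpq => ?_⟩
  simp only [smul_eq_mul]
  apply le_of_eq; ring

private lemma convexOn_linear' (S : Set ℝ) (hS : Convex ℝ S) (a : ℝ) :
    ConvexOn ℝ S (fun t => t * a) := by
  refine ⟨hS, fun u hu v hv p q hp hq hpq => ?_⟩
  simp only [smul_eq_mul]
  apply le_of_eq; ring

theorem gew2_theta2_logconcave
    (k : ℕ) (T V τ : Fin k → ℝ) (n r : Fin k → ℕ)
    (x : (i : Fin k) → Fin (r i) → ℝ)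
    (hT : ∀ i, 0 < T i) (hrn : ∀ i, r i ≤ n i)
    (hτ : ∀ i, 0 < τ i) (hx : ∀ i j, 0 < x i j)
    (θ₁ θ₃ θ₄ β : ℝ) (hθ : 0 < θ₁ ∧ 0 < θ₃ ∧ 0 < θ₄) (hβ : 0 < β)
    (c₁₂ c₁₃ : ℝ) (hcs : 1 ≤ c₁₂) (hcr : 0 < c₁₃) :
    ConcaveOn ℝ (Set.Ioi (0 : ℝ)) (fun t : ℝ =>
      (c₁₂ - 1) * Real.log t - c₁₃ * t
      - t * (∑ i, (r i : ℝ) / T i)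
      - ∑ i, ((n i : ℝ) - r i) * T i * Real.exp (-θ₁ - t / T i - θ₃ * V i - θ₄ * V i / T i) * τ i ^ β
      - ∑ i, ∑ j, T i * Real.exp (-θ₁ - t / T i - θ₃ * V i - θ₄ * V i / T i) * x i j ^ β) := by
  have hconv : Convex ℝ (Set.Ioi (0 : ℝ)) := convex_Ioi 0
  have h1 : ConcaveOn ℝ (Set.Ioi (0 : ℝ)) (fun t : ℝ => (c₁₂ - 1) * Real.log t) := by
    have := strictConcaveOn_log_Ioi.concaveOn.smul (c := c₁₂ - 1) (by linarith)
    simpa [smul_eq_mul] using this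
  have h2 := convexOn_linear (Set.Ioi (0 : ℝ)) hconv c₁₃
  have h3 := convexOn_linear' (Set.Ioi (0 : ℝ)) hconv (∑ i, (r i : ℝ) / T i)
  have h4 : ConvexOn ℝ (Set.Ioi (0 : ℝ)) (fun t : ℝ =>
      ∑ i, ((n i : ℝ) - r i) * T i * Real.exp (-θ₁ - t / T i - θ₃ * V i - θ₄ * V i / T i) * τ i ^ β) := by
    refine convexOn_sum' _ _ hconv _ fun i _ => ?_
    exact convexOn_mul_exp _ hconv _ _ (T i) _ _ _
      (mul_nonneg (by have := hrn i; simp only [sub_nonneg]; exact_mod_cast this) (hT i).le)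
      (le_of_lt (Real.rpow_pos_of_pos (hτ i) β))
  have h5 : ConvexOn ℝ (Set.Ioi (0 : ℝ)) (fun t : ℝ =>
      ∑ i, ∑ j, T i * Real.exp (-θ₁ - t / T i - θ₃ * V i - θ₄ * V i / T i) * x i j ^ β) := by
    refine convexOn_sum' _ _ hconv _ fun i _ => ?_
    refine convexOn_sum' _ _ hconv _ fun j _ => ?_
    exact convexOn_mul_exp _ hconv _ _ (T i) _ _ _ (hT i).le (le_of_lt (Real.rpow_pos_of_pos (hx i j) β))
  exact (((h1.sub h2).sub h3).sub h4).sub h5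
end
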